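/- Let j be a complex structure on V (j² = -I), F ⊆ W ⊆ V subspaces, and J the endomorphism of V ⊕ V* given by J(X,ξ) = (jX, -j*ξ). If V = W ⊕ j(F) (the Guillemin–Sternberg condition), then J(F ⊕ W⁰) ∩ (W ⊕ F⁰) = 0, where F⁰, W⁰ ⊆ V* are the annihilators of F and W. -/
import Mathlib


open Module LinearMap

set_option maxSynthPendingDepth 3

/-- The generalized complex structure `J(X,ξ) = (jX, -j*ξ)` on `V ⊕ V*`
associated to a complex structure `j` on `V`. -/
noncomputable def Jcx (V : Type) [AddCommGroup V] [Module ℝ V]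
    (j : V →ₗ[ℝ] V) :
    (V × Module.Dual ℝ V) →ₗ[ℝ] (V × Module.Dual ℝ V) :=
  LinearMap.prod
    (j ∘ₗ LinearMap.fst ℝ V (Module.Dual ℝ V))
    (-(j.dualMap ∘ₗ LinearMap.snd ℝ V (Module.Dual ℝ V)))

/-- Linear version of the Guillemin–Sternberg condition: if `j² = -I`,
`F ⊆ W ⊆ V` and `V = W ⊕ j(F)`, then
`J(F ⊕ W⁰) ∩ (W ⊕ F⁰) = 0` for `J(X+ξ) = jX - j*ξ`. -/
theorem guillemin_sternberg_condition
    (V : Type) [AddCommGroup V] [Module ℝ V] [FiniteDimensional ℝ V]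
    (j : V →ₗ[ℝ] V) (hj2 : ∀ x, j (j x) = -x)
    (F W : Submodule ℝ V) (hFW : F ≤ W)
    (hsup : W ⊔ Submodule.map j F = ⊤)
    (hinf : W ⊓ Submodule.map j F = ⊥) :
    Submodule.map (Jcx V j) (F.prod W.dualAnnihilator) ⊓
      (W.prod F.dualAnnihilator) = ⊥ := by
  rw [Submodule.eq_bot_iff]
  rintro ⟨x, ξ⟩ ⟨⟨⟨f, η⟩, ⟨hf, hη⟩, heq⟩, hxW, hξF⟩
  have hx : x = j f := by
    have := congrArg Prod.fst heq
    simpa [Jcx] using this.symm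
  have hξ : ξ = -(j.dualMap η) := by
    have := congrArg Prod.snd heq
    simpa [Jcx] using this.symm
  have hηjF : ∀ z ∈ Submodule.map j F, η z = 0 := by
    rintro z ⟨f', hf', rfl⟩
    have h := (Submodule.mem_dualAnnihilator _).mp hξF f' hf'
    rw [hξ] at h
    simpa using h
  have hη0 : η = 0 := by
    ext v
    have hv : v ∈ W ⊔ Submodule.map j F := by rw [hsup]; trivial
    obtain ⟨w, hw, z, hz, rfl⟩ := Submodule.mem_sup.mp hv
    have h1 : η w = 0 := (Submodule.mem_dualAnnihilator _).mp hη w hw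
    have h2 : η z = 0 := hηjF z hz
    simp [h1, h2]
  have hx0 : x = 0 := by
    have : x ∈ W ⊓ Submodule.map j F :=
      ⟨hxW, hx ▸ Submodule.mem_map_of_mem hf⟩
    simpa [hinf] using this
  simp [Prod.ext_iff, hx0, hη0, hξ]
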